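/- Let A be an m×n complex matrix of rank r with singular value decomposition A = U₁Σ₁V₁*, and B an m×n complex matrix of rank s with singular value decomposition B = Ũ₁Σ̃₁Ṽ₁*, and let E = B − A. Then ‖B† − A†‖_F² = ‖Σ̃₁⁻¹Ũ₁*U₂‖_F² + ‖Ṽ₂*V₁Σ₁⁻¹‖_F² + ‖B†EA†‖_F². -/

import Mathlib

open Matrix

/-- The square of the Frobenius norm of a complex matrix. -/
noncomputable def frobSq {α β : Type*} [Fintype α] [Fintype β] (M : Matrix α β ℂ) : ℝ :=
  ∑ i, ∑ j, ‖M i j‖ ^ 2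

/-- The spectral norm (ℓ²-operator norm) of a complex matrix. -/
noncomputable def spec {α β : Type*} [Fintype α] [Fintype β] [DecidableEq β]
    (M : Matrix α β ℂ) : ℝ :=
  ‖LinearMap.toContinuousLinearMap (Matrix.toEuclideanLin M)‖

/-- `X` is the Moore–Penrose inverse of `M` (the four Penrose equations). -/
def IsMoorePenrose {α β : Type*} [Fintype α] [Fintype β]
    (M : Matrix α β ℂ) (X : Matrix β α ℂ) : Prop :=
  M * X * M = M ∧ X * M * X = X ∧ (M * X)ᴴ = M * X ∧ (X * M)ᴴ = X * M



lemma frobSq_eq_re_trace {α β : Type*} [Fintype α] [Fintype β] (M : Matrix α β ℂ) :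
    frobSq M = (trace (Mᴴ * M)).re := by
  simp only [frobSq, trace, diag_apply, Matrix.mul_apply, conjTranspose_apply,
    Complex.re_sum]
  rw [Finset.sum_comm]
  congr 1; ext i; congr 1; ext j
  rw [Complex.sq_norm, Complex.normSq_apply, Complex.mul_re]
  simp [Complex.star_def]

lemma frobSq_neg {α β : Type*} [Fintype α] [Fintype β] (M : Matrix α β ℂ) :
    frobSq (-M) = frobSq M := by simp [frobSq]

lemma frobSq_mul_left {p q k : Type*} [Fintype p] [Fintype q] [Fintype k] [DecidableEq q]
    (P : Matrix p q ℂ) (h : Pᴴ * P = 1) (M : Matrix q k ℂ) :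
    frobSq (P * M) = frobSq M := by
  rw [frobSq_eq_re_trace, frobSq_eq_re_trace, conjTranspose_mul]
  rw [Matrix.mul_assoc, ← Matrix.mul_assoc Pᴴ, h, Matrix.one_mul]

lemma frobSq_mul_rightT {p q k : Type*} [Fintype p] [Fintype q] [Fintype k] [DecidableEq q]
    (Q : Matrix p q ℂ) (h : Qᴴ * Q = 1) (M : Matrix k q ℂ) :
    frobSq (M * Qᴴ) = frobSq M := by
  rw [frobSq_eq_re_trace, frobSq_eq_re_trace, conjTranspose_mul, conjTranspose_conjTranspose]
  rw [Matrix.mul_assoc, trace_mul_comm, Matrix.mul_assoc, Matrix.mul_assoc, h, Matrix.mul_one]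

lemma frobSq_add_orth {α β : Type*} [Fintype α] [Fintype β] (X Y : Matrix α β ℂ)
    (h : trace (Xᴴ * Y) = 0) :
    frobSq (X + Y) = frobSq X + frobSq Y := by
  have h2 : trace (Yᴴ * X) = 0 := by
    have : Yᴴ * X = (Xᴴ * Y)ᴴ := by simp
    rw [this, trace_conjTranspose, h, star_zero]
  rw [frobSq_eq_re_trace, frobSq_eq_re_trace, frobSq_eq_re_trace, conjTranspose_add,
    Matrix.add_mul, Matrix.mul_add, Matrix.mul_add, trace_add, trace_add, trace_add, h, h2]
  simp

lemma cols_orth {p q1 q2 : Type*} [Fintype p] [Fintype q1] [Fintype q2]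
    [DecidableEq q1] [DecidableEq q2]
    (W₁ : Matrix p q1 ℂ) (W₂ : Matrix p q2 ℂ)
    (h : (fromCols W₁ W₂)ᴴ * fromCols W₁ W₂ = 1) :
    W₁ᴴ * W₁ = 1 ∧ W₁ᴴ * W₂ = 0 ∧ W₂ᴴ * W₁ = 0 ∧ W₂ᴴ * W₂ = 1 := by
  rw [conjTranspose_fromCols_eq_fromRows_conjTranspose, fromRows_mul_fromCols,
    ← fromBlocks_one, fromBlocks_inj] at h
  exact ⟨h.1, h.2.1, h.2.2.1, h.2.2.2⟩

lemma cols_complete {p q1 q2 : Type*} [Fintype p] [Fintype q1] [Fintype q2] [DecidableEq p]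
    (W₁ : Matrix p q1 ℂ) (W₂ : Matrix p q2 ℂ)
    (h : fromCols W₁ W₂ * (fromCols W₁ W₂)ᴴ = 1) :
    W₁ * W₁ᴴ + W₂ * W₂ᴴ = 1 := by
  rwa [conjTranspose_fromCols_eq_fromRows_conjTranspose, fromCols_mul_fromRows] at h

lemma mul_mul_zero {a b c d : Type*} [Fintype a] [Fintype b] [Fintype c] [Fintype d]
    (P : Matrix a b ℂ) (Q : Matrix b c ℂ) (h : P * Q = 0) (Z : Matrix c d ℂ) :
    P * (Q * Z) = 0 := by rw [← Matrix.mul_assoc, h, Matrix.zero_mul]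

theorem stmt15 {m n r s : ℕ}
    (A B : Matrix (Fin m) (Fin n) ℂ)
    (hrankA : A.rank = r) (hrankB : B.rank = s)
    (σ : Fin r → ℝ) (hσmono : Antitone σ) (hσpos : ∀ i, 0 < σ i)
    (τ : Fin s → ℝ) (hτmono : Antitone τ) (hτpos : ∀ i, 0 < τ i)
    (U₁ : Matrix (Fin m) (Fin r) ℂ) (U₂ : Matrix (Fin m) (Fin (m - r)) ℂ)
    (V₁ : Matrix (Fin n) (Fin r) ℂ) (V₂ : Matrix (Fin n) (Fin (n - r)) ℂ)
    (tU₁ : Matrix (Fin m) (Fin s) ℂ) (tU₂ : Matrix (Fin m) (Fin (m - s)) ℂ)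
    (tV₁ : Matrix (Fin n) (Fin s) ℂ) (tV₂ : Matrix (Fin n) (Fin (n - s)) ℂ)
    (hU : (fromCols U₁ U₂)ᴴ * fromCols U₁ U₂ = 1
        ∧ fromCols U₁ U₂ * (fromCols U₁ U₂)ᴴ = 1)
    (hV : (fromCols V₁ V₂)ᴴ * fromCols V₁ V₂ = 1
        ∧ fromCols V₁ V₂ * (fromCols V₁ V₂)ᴴ = 1)
    (htU : (fromCols tU₁ tU₂)ᴴ * fromCols tU₁ tU₂ = 1
        ∧ fromCols tU₁ tU₂ * (fromCols tU₁ tU₂)ᴴ = 1)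
    (htV : (fromCols tV₁ tV₂)ᴴ * fromCols tV₁ tV₂ = 1
        ∧ fromCols tV₁ tV₂ * (fromCols tV₁ tV₂)ᴴ = 1)
    (hAsvd : A = U₁ * diagonal (fun i => (σ i : ℂ)) * V₁ᴴ)
    (hBsvd : B = tU₁ * diagonal (fun i => (τ i : ℂ)) * tV₁ᴴ)
    (E : Matrix (Fin m) (Fin n) ℂ) (hE : E = B - A)
    (Adag Bdag : Matrix (Fin n) (Fin m) ℂ)
    (hAdag : Adag = V₁ * diagonal (fun i => ((σ i : ℂ))⁻¹) * U₁ᴴ)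
    (hBdag : Bdag = tV₁ * diagonal (fun i => ((τ i : ℂ))⁻¹) * tU₁ᴴ) :
    frobSq (Bdag - Adag)
      = frobSq (diagonal (fun i => ((τ i : ℂ))⁻¹) * tU₁ᴴ * U₂)
        + frobSq (tV₂ᴴ * V₁ * diagonal (fun i => ((σ i : ℂ))⁻¹))
        + frobSq (Bdag * E * Adag) := by
  obtain ⟨hU1, hU12, hU21, hU22⟩ := cols_orth U₁ U₂ hU.1
  have hUc := cols_complete U₁ U₂ hU.2
  obtain ⟨hV1, hV12, hV21, hV22⟩ := cols_orth V₁ V₂ hV.1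
  obtain ⟨htU1, htU12, htU21, htU22⟩ := cols_orth tU₁ tU₂ htU.1
  obtain ⟨htV1, htV12, htV21, htV22⟩ := cols_orth tV₁ tV₂ htV.1
  have htVc := cols_complete tV₁ tV₂ htV.2
  set S : Matrix (Fin s) (Fin s) ℂ := diagonal (fun i => ((τ i : ℂ))⁻¹) with hS
  set T : Matrix (Fin r) (Fin r) ℂ := diagonal (fun i => ((σ i : ℂ))⁻¹) with hT
  have hScan : S * diagonal (fun i => (τ i : ℂ)) = 1 := by
    rw [hS, diagonal_mul_diagonal]
    convert diagonal_one using 2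
    ext i
    exact inv_mul_cancel₀ (by exact_mod_cast (hτpos i).ne')
  have hTcan : diagonal (fun i => (σ i : ℂ)) * T = 1 := by
    rw [hT, diagonal_mul_diagonal]
    convert diagonal_one using 2
    ext i
    exact mul_inv_cancel₀ (by exact_mod_cast (hσpos i).ne')
  have hBdB : Bdag * B = tV₁ * tV₁ᴴ := by
    rw [hBdag, hBsvd]
    simp only [Matrix.mul_assoc]
    rw [← Matrix.mul_assoc tU₁ᴴ tU₁, htU1, Matrix.one_mul,
      ← Matrix.mul_assoc S, hScan, Matrix.one_mul]
  have hAAd : A * Adag = U₁ * U₁ᴴ := by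
    rw [hAdag, hAsvd]
    simp only [Matrix.mul_assoc]
    rw [← Matrix.mul_assoc V₁ᴴ V₁, hV1, Matrix.one_mul,
      ← Matrix.mul_assoc _ T, hTcan, Matrix.one_mul]
  have e1 : tV₁ * (S * tU₁ᴴ * U₂) * U₂ᴴ = Bdag - Bdag * (U₁ * U₁ᴴ) := by
    have h2 : U₂ * U₂ᴴ = 1 - U₁ * U₁ᴴ := eq_sub_of_add_eq' hUc
    calc tV₁ * (S * tU₁ᴴ * U₂) * U₂ᴴ = Bdag * (U₂ * U₂ᴴ) := by
          rw [hBdag]; simp only [Matrix.mul_assoc]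
    _ = Bdag - Bdag * (U₁ * U₁ᴴ) := by rw [h2, Matrix.mul_sub, Matrix.mul_one]
  have e2 : tV₂ * (tV₂ᴴ * V₁ * T) * U₁ᴴ = Adag - tV₁ * (tV₁ᴴ * Adag) := by
    have h2 : tV₂ * tV₂ᴴ = 1 - tV₁ * tV₁ᴴ := eq_sub_of_add_eq' htVc
    calc tV₂ * (tV₂ᴴ * V₁ * T) * U₁ᴴ = tV₂ * tV₂ᴴ * Adag := by
          rw [hAdag]; simp only [Matrix.mul_assoc]
    _ = Adag - tV₁ * (tV₁ᴴ * Adag) := by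
          rw [h2, Matrix.sub_mul, Matrix.one_mul, Matrix.mul_assoc]
  have e3 : Bdag * E * Adag = tV₁ * (tV₁ᴴ * Adag) - Bdag * (U₁ * U₁ᴴ) := by
    have h2 : Bdag * (B - A) * Adag = Bdag * B * Adag - Bdag * (A * Adag) := by
      simp only [Matrix.mul_sub, Matrix.sub_mul, Matrix.mul_assoc]
    rw [hE, h2, hBdB, hAAd, Matrix.mul_assoc]
  have hdecomp : Bdag - Adag
      = tV₁ * (S * tU₁ᴴ * U₂) * U₂ᴴ
        + (-(tV₂ * (tV₂ᴴ * V₁ * T) * U₁ᴴ) + -(Bdag * E * Adag)) := by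
    rw [e1, e2, e3]; abel
  have h12 : trace ((tV₁ * (S * tU₁ᴴ * U₂) * U₂ᴴ)ᴴ
      * (-(tV₂ * (tV₂ᴴ * V₁ * T) * U₁ᴴ))) = 0 := by
    simp [conjTranspose_mul, Matrix.mul_assoc, mul_mul_zero _ _ htV12]
  have h13 : trace ((tV₁ * (S * tU₁ᴴ * U₂) * U₂ᴴ)ᴴ * (-(Bdag * E * Adag))) = 0 := by
    rw [Matrix.trace_mul_comm]
    simp [conjTranspose_mul, hAdag, Matrix.mul_assoc, mul_mul_zero _ _ hU12]
  have h23 : trace ((-(tV₂ * (tV₂ᴴ * V₁ * T) * U₁ᴴ))ᴴ * (-(Bdag * E * Adag))) = 0 := by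
    simp [conjTranspose_mul, hBdag, Matrix.mul_assoc, mul_mul_zero _ _ htV21]
  have h1sum : trace ((tV₁ * (S * tU₁ᴴ * U₂) * U₂ᴴ)ᴴ
      * (-(tV₂ * (tV₂ᴴ * V₁ * T) * U₁ᴴ) + -(Bdag * E * Adag))) = 0 := by
    rw [Matrix.mul_add, trace_add, h12, h13, add_zero]
  rw [hdecomp, frobSq_add_orth _ _ h1sum, frobSq_add_orth _ _ h23,
    frobSq_neg, frobSq_neg,
    frobSq_mul_rightT U₂ hU22, frobSq_mul_left tV₁ htV1,
    frobSq_mul_rightT U₁ hU1, frobSq_mul_left tV₂ htV22]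
  ring
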